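/- Let A be the 8×8 real symmetric matrix whose rows are (4,0,0,−2,−2,0,0,0), (0,4,0,−2,−2,0,0,0), (0,0,4,−2,−2,0,0,0), (−2,−2,−2,13,−1,−2,−2,−2), (−2,−2,−2,−1,13,−2,−2,−2), (0,0,0,−2,−2,4,0,0), (0,0,0,−2,−2,0,4,0), (0,0,0,−2,−2,0,0,4). Then the characteristic polynomial of A equals X·(X − 4)⁵·(X − 14)·(X − 16); equivalently, the eigenvalues of A, counted with multiplicity, are 0, 4, 4, 4, 4, 4, 14 and 16. In particular, the kernel of A is one-dimensional and the smallest nonzero eigenvalue of A equals 4. -/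

import Mathlib

open Polynomial

/-- The Laplacian matrix `A_4(q)` of the explicit example of Section 2.3. -/
def exampleLaplacian : Matrix (Fin 8) (Fin 8) ℝ :=
  !![ 4,  0,  0, -2, -2,  0,  0,  0;
      0,  4,  0, -2, -2,  0,  0,  0;
      0,  0,  4, -2, -2,  0,  0,  0;
     -2, -2, -2, 13, -1, -2, -2, -2;
     -2, -2, -2, -1, 13, -2, -2, -2;
      0,  0,  0, -2, -2,  4,  0,  0;
      0,  0,  0, -2, -2,  0,  4,  0;
      0,  0,  0, -2, -2,  0,  0,  4]

/-- Reindexing of `Fin 8` splitting off the two "middle" vertices `3, 4`. -/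
def σ8 : (Fin 6 ⊕ Fin 2) ≃ Fin 8 where
  toFun := Sum.elim ![0,1,2,5,6,7] ![3,4]
  invFun := ![.inl 0, .inl 1, .inl 2, .inr 0, .inr 1, .inl 3, .inl 4, .inl 5]
  left_inv := by decide
  right_inv := by decide

lemma exampleLaplacian_subm (r : ℝ) :
    (Matrix.scalar (Fin 8) r - exampleLaplacian).submatrix σ8 σ8
    = Matrix.fromBlocks ((r-4) • (1 : Matrix (Fin 6) (Fin 6) ℝ))
        (Matrix.of fun _ _ => 2) (Matrix.of fun _ _ => 2)
        !![r-13, 1; 1, r-13] := by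
  ext i j
  rcases i with i | i <;> rcases j with j | j <;> fin_cases i <;> fin_cases j <;>
    first
      | rfl
      | exact show r - 4 = (r-4)*1 by ring
      | exact show (0:ℝ) - 0 = (r-4)*0 by ring
      | exact show (0:ℝ) - -2 = 2 by norm_num
      | exact show (0:ℝ) - -1 = 1 by norm_num

lemma exampleLaplacian_det_scalar_sub (r : ℝ) (hr : r ≠ 4) :
    (Matrix.scalar (Fin 8) r - exampleLaplacian).det
    = r*(r-4)^5*(r-14)*(r-16) := by
  have h4 : r - 4 ≠ 0 := sub_ne_zero.mpr hr
  rw [← Matrix.det_submatrix_equiv_self σ8, exampleLaplacian_subm r]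
  haveI : Invertible ((r-4) • (1 : Matrix (Fin 6) (Fin 6) ℝ)) :=
    ⟨(r-4)⁻¹ • 1, by rw [smul_mul_smul_comm, one_mul, inv_mul_cancel₀ h4, one_smul],
      by rw [smul_mul_smul_comm, one_mul, mul_inv_cancel₀ h4, one_smul]⟩
  rw [Matrix.det_fromBlocks₁₁]
  have hinv : ⅟((r-4) • (1 : Matrix (Fin 6) (Fin 6) ℝ)) = (r-4)⁻¹ • 1 :=
    invOf_eq_right_inv
      (by rw [smul_mul_smul_comm, one_mul, mul_inv_cancel₀ h4, one_smul])
  rw [hinv]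
  have hCB : (Matrix.of fun _ _ => (2:ℝ) : Matrix (Fin 2) (Fin 6) ℝ)
      * ((r-4)⁻¹ • (1 : Matrix (Fin 6) (Fin 6) ℝ))
      * (Matrix.of fun _ _ => 2 : Matrix (Fin 6) (Fin 2) ℝ)
      = Matrix.of fun _ _ => 24 * (r-4)⁻¹ := by
    rw [Matrix.mul_smul, Matrix.mul_one, Matrix.smul_mul]
    ext i j
    simp [Matrix.mul_apply, Fin.sum_univ_succ, Matrix.smul_apply, smul_eq_mul]
    ring
  rw [hCB]
  have : (!![r-13, 1; 1, r-13] - Matrix.of fun _ _ => 24 * (r-4)⁻¹ : Matrix (Fin 2) (Fin 2) ℝ)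
      = !![r-13 - 24*(r-4)⁻¹, 1 - 24*(r-4)⁻¹; 1 - 24*(r-4)⁻¹, r-13 - 24*(r-4)⁻¹] := by
    ext i j; fin_cases i <;> fin_cases j <;> simp
  rw [this, Matrix.det_smul, Matrix.det_one, Matrix.det_fin_two_of]
  simp only [Fintype.card_fin, mul_one]
  field_simp
  ring

lemma exampleLaplacian_eval_charpoly (r : ℝ) :
    exampleLaplacian.charpoly.eval r
      = (Matrix.scalar (Fin 8) r - exampleLaplacian).det := by
  have h1 := eval_det (Matrix.charmatrix exampleLaplacian) r
  have h2 : Polynomial.eval ((Matrix.scalar (Fin 8)) r)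
      (matPolyEquiv (Matrix.charmatrix exampleLaplacian))
      = Matrix.scalar (Fin 8) r - exampleLaplacian := by
    rw [Matrix.matPolyEquiv_charmatrix, eval_sub, eval_X, eval_C]
  rw [Matrix.charpoly]
  exact h1.trans (congrArg Matrix.det h2)

lemma exampleLaplacian_charpoly :
    exampleLaplacian.charpoly = X * (X - C 4) ^ 5 * (X - C 14) * (X - C 16) := by
  apply Polynomial.eq_of_infinite_eval_eq
  refine (Set.Ioi_infinite (4:ℝ)).mono ?_
  intro r hr
  have hr4 : r ≠ 4 := ne_of_gt hr
  simp only [Set.mem_setOf_eq, exampleLaplacian_eval_charpoly,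
    exampleLaplacian_det_scalar_sub r hr4]
  simp [eval_mul, eval_pow]

-- row extraction facts
lemma row0 : exampleLaplacian 0 = ![4,0,0,-2,-2,0,0,0] := rfl
lemma row1 : exampleLaplacian 1 = ![0,4,0,-2,-2,0,0,0] := rfl
lemma row2 : exampleLaplacian 2 = ![0,0,4,-2,-2,0,0,0] := rfl
lemma row3 : exampleLaplacian 3 = ![-2,-2,-2,13,-1,-2,-2,-2] := rfl
lemma row4 : exampleLaplacian 4 = ![-2,-2,-2,-1,13,-2,-2,-2] := rfl
lemma row5 : exampleLaplacian 5 = ![0,0,0,-2,-2,4,0,0] := rfl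
lemma row6 : exampleLaplacian 6 = ![0,0,0,-2,-2,0,4,0] := rfl
lemma row7 : exampleLaplacian 7 = ![0,0,0,-2,-2,0,0,4] := rfl

lemma fs1 : (Fin.succ (0 : Fin 7)) = (1 : Fin 8) := rfl
lemma fs2 : (Fin.succ (0:Fin 6)).succ = (2:Fin 8) := rfl
lemma fs3 : (Fin.succ (0:Fin 5)).succ.succ = (3:Fin 8) := rfl
lemma fs4 : (Fin.succ (0:Fin 4)).succ.succ.succ = (4:Fin 8) := rfl
lemma fs5 : (Fin.succ (0:Fin 3)).succ.succ.succ.succ = (5:Fin 8) := rfl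
lemma fs6 : (Fin.succ (0:Fin 2)).succ.succ.succ.succ.succ = (6:Fin 8) := rfl
lemma fs7 : (Fin.succ (0:Fin 1)).succ.succ.succ.succ.succ.succ = (7:Fin 8) := rfl

lemma exampleLaplacian_mulVec (v : Fin 8 → ℝ) (i : Fin 8) :
    exampleLaplacian.mulVec v i = dotProduct (exampleLaplacian i) v := rfl

lemma exampleLaplacian_ker :
    LinearMap.ker exampleLaplacian.mulVecLin
      = Submodule.span ℝ {(fun _ => (1:ℝ) : Fin 8 → ℝ)} := by
  apply le_antisymm
  · intro v hv
    rw [LinearMap.mem_ker, Matrix.mulVecLin_apply] at hv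
    have e : ∀ i, exampleLaplacian.mulVec v i = 0 := fun i => congrFun hv i
    have e0 := e 0; have e1 := e 1; have e2 := e 2; have e3 := e 3
    have e4 := e 4; have e5 := e 5; have e6 := e 6; have e7 := e 7
    simp only [exampleLaplacian_mulVec, row0, row1, row2, row3, row4, row5, row6, row7,
      dotProduct, Fin.sum_univ_succ, Fin.sum_univ_zero, Matrix.cons_val_zero,
      Matrix.cons_val_succ, add_zero, fs1, fs2, fs3, fs4, fs5, fs6, fs7,
      zero_mul, zero_add, neg_mul] at e0 e1 e2 e3 e4 e5 e6 e7
    rw [Submodule.mem_span_singleton]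
    refine ⟨v 3, funext fun i => ?_⟩
    fin_cases i <;> simp [Pi.smul_apply, smul_eq_mul] <;> linarith
  · rw [Submodule.span_le, Set.singleton_subset_iff]
    rw [SetLike.mem_coe, LinearMap.mem_ker, Matrix.mulVecLin_apply]
    funext i
    fin_cases i <;>
      simp [exampleLaplacian_mulVec, row0, row1, row2, row3, row4, row5, row6, row7,
        dotProduct, Fin.sum_univ_succ] <;> norm_num

/-- Section 2.3: the characteristic polynomial of the explicit 8×8
Laplacian matrix is `X (X−4)⁵ (X−14) (X−16)`; in particular its kernel is
one-dimensional, and its smallest nonzero eigenvalue equals `4`. -/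
theorem exampleLaplacian_spectrum :
    exampleLaplacian.charpoly
        = X * (X - C 4) ^ 5 * (X - C 14) * (X - C 16) ∧
    Module.finrank ℝ (LinearMap.ker exampleLaplacian.mulVecLin) = 1 ∧
    IsLeast {μ : ℝ | μ ≠ 0 ∧ ∃ v : Fin 8 → ℝ, v ≠ 0 ∧
      exampleLaplacian.mulVec v = μ • v} 4 := by
  refine ⟨exampleLaplacian_charpoly, ?_, ?_, ?_⟩
  · rw [exampleLaplacian_ker]
    exact finrank_span_singleton (by
      intro h
      have := congrFun h 0
      norm_num at this)
  · -- 4 is an eigenvalue with eigenvector (1,-1,0,...,0)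
    refine ⟨by norm_num, ![1,-1,0,0,0,0,0,0], ?_, ?_⟩
    · intro h
      have := congrFun h 0
      norm_num at this
    · funext i
      fin_cases i <;>
        simp [exampleLaplacian_mulVec, row0, row1, row2, row3, row4, row5, row6, row7,
          dotProduct, Fin.sum_univ_succ, Matrix.cons_val_zero, Matrix.cons_val_succ,
          fs1, fs2, fs3, fs4, fs5, fs6, fs7,
          show (![1,-1,0,0,0,0,0,0] : Fin 8 → ℝ) 5 = 0 from rfl,
          show (![1,-1,0,0,0,0,0,0] : Fin 8 → ℝ) 6 = 0 from rfl,
          show (![1,-1,0,0,0,0,0,0] : Fin 8 → ℝ) 7 = 0 from rfl] <;>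
        norm_num
  · -- lower bound
    rintro μ ⟨hμ, v, hv, heig⟩
    have hmv : (Matrix.scalar (Fin 8) μ - exampleLaplacian).mulVec v = 0 := by
      rw [Matrix.sub_mulVec, heig]
      funext i
      simp [Matrix.mulVec_diagonal, Matrix.scalar_apply]
    have hdet : (Matrix.scalar (Fin 8) μ - exampleLaplacian).det = 0 :=
      Matrix.exists_mulVec_eq_zero_iff.mp ⟨v, hv, hmv⟩
    have hval : μ * (μ-4)^5 * (μ-14) * (μ-16) = 0 := by
      have := exampleLaplacian_eval_charpoly μ
      rw [exampleLaplacian_charpoly, hdet] at this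
      simpa [eval_mul, eval_pow] using this
    rcases mul_eq_zero.mp hval with h | h16
    · rcases mul_eq_zero.mp h with h' | h14
      · rcases mul_eq_zero.mp h' with h0 | h4
        · exact absurd h0 hμ
        · have : μ - 4 = 0 := pow_eq_zero_iff (by norm_num : (5:ℕ) ≠ 0) |>.mp h4
          linarith
      · linarith [sub_eq_zero.mp h14]
    · linarith [sub_eq_zero.mp h16]
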